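/- (Bilinear map lemma) Let $k$ be an algebraically closed field and let $U$, $V$, $W$ be finite-dimensional $k$-vector spaces with $U \neq 0$ and $V \neq 0$. Let $\varphi : U \times V \to W$ be a bilinear map such that $\varphi(u,v) \neq 0$ whenever $u \neq 0$ and $v \neq 0$. Then $\dim W \geq \dim U + \dim V - 1$. -/

import Mathlib

open MvPolynomial Finset

namespace BilinHelp

def w (m n : ℕ) : Fin m ⊕ Fin n → ℕ × ℕ := Sum.elim (fun _ => (1, 0)) (fun _ => (0, 1))

variable {k : Type*} [Field k] {m n : ℕ}

theorem weight_eq (d : Fin m ⊕ Fin n →₀ ℕ) :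
    Finsupp.weight (w m n) d = (∑ i, d (Sum.inl i), ∑ j, d (Sum.inr j)) := by
  rw [Finsupp.weight_apply, Finsupp.sum_fintype _ _ (fun s => by simp)]
  rw [Fintype.sum_sum_type]
  ext <;> simp [w, Prod.fst_sum, Prod.snd_sum]

theorem wHC_mul {σ : Type*} {M : Type*} [AddCancelCommMonoid M]
    (w : σ → M) (u v : M) (p q : MvPolynomial σ k) (hq : q.IsWeightedHomogeneous w v) :
    weightedHomogeneousComponent w (u + v) (p * q)
      = weightedHomogeneousComponent w u p * q := by
  conv_lhs => rw [p.as_sum, Finset.sum_mul, map_sum]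
  conv_rhs => rw [p.as_sum, map_sum, Finset.sum_mul]
  refine Finset.sum_congr rfl fun d _ => ?_
  have hmon : (monomial d (coeff d p)).IsWeightedHomogeneous w (Finsupp.weight w d) :=
    isWeightedHomogeneous_monomial _ _ _ rfl
  have hdm := hmon.mul hq
  by_cases h : (Finsupp.weight w d : M) = u
  · rw [h] at hdm hmon
    rw [hdm.weightedHomogeneousComponent_same,
      hmon.weightedHomogeneousComponent_same]
  · rw [hdm.weightedHomogeneousComponent_ne _
      (fun hc => h (add_right_cancel (hc.symm : Finsupp.weight w d + v = u + v))),
      hmon.weightedHomogeneousComponent_ne _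
      (fun hc => h hc.symm), zero_mul]

theorem IWH_pow {σ : Type*} {M : Type*} [AddCommMonoid M] {w : σ → M} {q : MvPolynomial σ k}
    {v : M} (hq : q.IsWeightedHomogeneous w v) (N : ℕ) :
    (q ^ N).IsWeightedHomogeneous w (N • v) := by
  induction N with
  | zero => simpa using isWeightedHomogeneous_one k w
  | succ N ih =>
      rw [pow_succ, succ_nsmul]
      exact ih.mul hq

set_option maxHeartbeats 2000000 in
theorem core [IsAlgClosed k] (m n r : ℕ) (hm : 1 ≤ m) (hn : 1 ≤ n) (hr : 1 ≤ r)
    (f : Fin r → MvPolynomial (Fin m ⊕ Fin n) k)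
    (hf : ∀ t, (f t).IsWeightedHomogeneous (w m n) (1, 1))
    (hz : ∀ p : Fin m ⊕ Fin n → k, (∀ t, eval p (f t) = 0) →
      (∀ i, p (Sum.inl i) = 0) ∨ (∀ j, p (Sum.inr j) = 0)) :
    m + n ≤ r + 1 := by
  classical
  by_contra hc
  push_neg at hc
  replace hc : r + 2 ≤ m + n := hc
  set I : Ideal (MvPolynomial (Fin m ⊕ Fin n) k) := Ideal.span (Set.range f) with hI
  -- Step A : Nullstellensatz
  have stepA : ∀ i : Fin m, ∀ j : Fin n,
      (X (Sum.inl i) * X (Sum.inr j) : MvPolynomial (Fin m ⊕ Fin n) k) ∈ I.radical := by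
    intro i j
    rw [← vanishingIdeal_zeroLocus_eq_radical (K := k)]
    rw [mem_vanishingIdeal_iff]
    intro p hp
    rw [mem_zeroLocus_iff] at hp
    have := hz p (fun t => hp (f t) (Ideal.subset_span ⟨t, rfl⟩))
    rcases this with h | h
    · simp [h i]
    · simp [h j]
  -- Step B : uniform power
  have : ∀ ij : Fin m × Fin n, ∃ N : ℕ,
      (X (Sum.inl ij.1) * X (Sum.inr ij.2) : MvPolynomial (Fin m ⊕ Fin n) k) ^ N ∈ I := by
    intro ij
    exact Ideal.mem_radical_iff.mp (stepA ij.1 ij.2)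
  choose Nf hNf using this
  set N : ℕ := (Finset.univ.sup Nf) + 1 with hN
  have hN1 : 1 ≤ N := Nat.le_add_left 1 _
  have hpow : ∀ i : Fin m, ∀ j : Fin n,
      (X (Sum.inl i) * X (Sum.inr j) : MvPolynomial (Fin m ⊕ Fin n) k) ^ N ∈ I := by
    intro i j
    have hle : Nf (i, j) ≤ N :=
      le_trans (Finset.le_sup (Finset.mem_univ (i, j))) (Nat.le_succ _)
    have := Ideal.mul_mem_right
      ((X (Sum.inl i) * X (Sum.inr j) : MvPolynomial (Fin m ⊕ Fin n) k) ^ (N - Nf (i, j))) _ (hNf (i, j))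
    rwa [← pow_add, Nat.add_sub_cancel' hle] at this
  -- Step C : homogeneous coefficients
  have : ∀ ij : Fin m × Fin n, ∃ c : Fin r → MvPolynomial (Fin m ⊕ Fin n) k,
      ∑ t, c t * f t = (X (Sum.inl ij.1) * X (Sum.inr ij.2) : MvPolynomial (Fin m ⊕ Fin n) k) ^ N := by
    intro ij
    exact (Ideal.mem_span_range_iff_exists_fun).mp (hpow ij.1 ij.2)
  choose g hg using this
  set G : Fin m × Fin n → Fin r → MvPolynomial (Fin m ⊕ Fin n) k :=
    fun ij t => weightedHomogeneousComponent (w m n) (N - 1, N - 1) (g ij t) with hGdef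
  have hXXhom : ∀ i j, ((X (Sum.inl i) * X (Sum.inr j) : MvPolynomial (Fin m ⊕ Fin n) k) ^ N
      ).IsWeightedHomogeneous (w m n) (N, N) := by
    intro i j
    have h1 : (X (Sum.inl i) * X (Sum.inr j) : MvPolynomial (Fin m ⊕ Fin n) k
        ).IsWeightedHomogeneous (w m n) (1, 1) := by
      have := (isWeightedHomogeneous_X k (w m n) (Sum.inl i)).mul
        (isWeightedHomogeneous_X k (w m n) (Sum.inr j))
      simpa [w, Prod.ext_iff] using this
    have := IWH_pow h1 N
    simpa [Prod.ext_iff] using this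
  have hGf : ∀ i j, ∑ t, G (i, j) t * f t
      = (X (Sum.inl i) * X (Sum.inr j) : MvPolynomial (Fin m ⊕ Fin n) k) ^ N := by
    intro i j
    have h11 : ((N - 1, N - 1) : ℕ × ℕ) + (1, 1) = (N, N) := by
      ext <;> simp <;> omega
    calc ∑ t, G (i, j) t * f t
        = ∑ t, weightedHomogeneousComponent (w m n) (N, N) (g (i, j) t * f t) := by
          refine Finset.sum_congr rfl fun t _ => ?_
          rw [← h11, wHC_mul (w m n) _ _ _ _ (hf t)]
      _ = weightedHomogeneousComponent (w m n) (N, N) (∑ t, g (i, j) t * f t) := by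
          rw [map_sum]
      _ = _ := by
          rw [hg (i, j)]
          exact (hXXhom i j).weightedHomogeneousComponent_same
  -- Step D : the filtration and the key claim
  set D : ℕ := max m n * (N - 1) with hD
  set GenSet : ℕ → Set (MvPolynomial (Fin m ⊕ Fin n) k) := fun d =>
    {q | ∃ (γ : Fin r → ℕ) (ν : Fin m ⊕ Fin n →₀ ℕ) (e : ℕ), e ≤ D ∧
      Finsupp.weight (w m n) ν = (e, e) ∧ (∑ t, γ t) + e = d ∧
      q = (∏ t, f t ^ γ t) * monomial ν 1} with hGenSet
  set V : ℕ → Submodule k (MvPolynomial (Fin m ⊕ Fin n) k) :=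
    fun d => Submodule.span k (GenSet d) with hV
  have mulV : ∀ (d : ℕ) (t : Fin r) (x : MvPolynomial (Fin m ⊕ Fin n) k),
      x ∈ V d → f t * x ∈ V (d + 1) := by
    intro d t x hx
    induction hx using Submodule.span_induction with
    | mem q hq =>
        obtain ⟨γ, ν, e, he, hw, hsum, rfl⟩ := hq
        refine Submodule.subset_span ⟨γ + Pi.single t 1, ν, e, he, hw, ?_, ?_⟩
        · simp only [Pi.add_apply]
          rw [Finset.sum_add_distrib, Finset.sum_pi_single' t 1 Finset.univ]
          simp only [Finset.mem_univ, if_true]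
          omega
        · have : (∏ s, f s ^ ((γ + Pi.single t 1 : Fin r → ℕ)) s) = (∏ s, f s ^ γ s) * f t := by
            have h1 : (∏ s, f s ^ ((γ + Pi.single t 1 : Fin r → ℕ)) s)
                = (∏ s, f s ^ γ s) * ∏ s, f s ^ Pi.single t 1 s := by
              rw [← Finset.prod_mul_distrib]
              exact Finset.prod_congr rfl fun s _ => by rw [Pi.add_apply, pow_add]
            rw [h1]
            congr 1
            rw [Finset.prod_eq_single t (fun s _ hs => by simp [Pi.single_eq_of_ne hs])
              (fun h => absurd (Finset.mem_univ t) h)]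
            simp
          rw [this]
          ring
    | zero => simpa using Submodule.zero_mem _
    | add a b _ _ ha hb => rw [mul_add]; exact Submodule.add_mem _ ha hb
    | smul c a _ ha => rw [mul_smul_comm]; exact Submodule.smul_mem _ _ ha
  have key : ∀ d : ℕ, ∀ φ : MvPolynomial (Fin m ⊕ Fin n) k,
      φ.IsWeightedHomogeneous (w m n) (d, d) → φ ∈ V d := by
    intro d
    induction d using Nat.strong_induction_on with
    | _ d ih =>
      intro φ hφ
      rw [φ.as_sum]
      refine Submodule.sum_mem _ fun μ hμ => ?_
      have hwμ : Finsupp.weight (w m n) μ = (d, d) :=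
        hφ (MvPolynomial.mem_support_iff.mp hμ)
      have hmono : (monomial μ 1 : MvPolynomial (Fin m ⊕ Fin n) k) ∈ V d := by
        by_cases hdD : d ≤ D
        · exact Submodule.subset_span ⟨0, μ, d, hdD, hwμ, by simp, by simp⟩
        · push_neg at hdD
          -- sums of exponents
          have hsums : (∑ i, μ (Sum.inl i)) = d ∧ (∑ j, μ (Sum.inr j)) = d := by
            have := hwμ
            rw [weight_eq] at this
            exact ⟨congrArg Prod.fst this, congrArg Prod.snd this⟩
          -- pigeonhole
          have hex : ∃ i : Fin m, N ≤ μ (Sum.inl i) := by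
            by_contra hcon
            push_neg at hcon
            have : (∑ i, μ (Sum.inl i)) ≤ m * (N - 1) := by
              calc (∑ i, μ (Sum.inl i)) ≤ ∑ _i : Fin m, (N - 1) :=
                    Finset.sum_le_sum (fun i _ => by have := hcon i; omega)
                _ = m * (N - 1) := by simp [Finset.sum_const, mul_comm]
            have hmD : m * (N - 1) ≤ D := by
              rw [hD]; exact Nat.mul_le_mul_right _ (le_max_left _ _)
            omega
          have hey : ∃ j : Fin n, N ≤ μ (Sum.inr j) := by
            by_contra hcon
            push_neg at hcon
            have : (∑ j, μ (Sum.inr j)) ≤ n * (N - 1) := by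
              calc (∑ j, μ (Sum.inr j)) ≤ ∑ _j : Fin n, (N - 1) :=
                    Finset.sum_le_sum (fun j _ => by have := hcon j; omega)
                _ = n * (N - 1) := by simp [Finset.sum_const, mul_comm]
            have hnD : n * (N - 1) ≤ D := by
              rw [hD]; exact Nat.mul_le_mul_right _ (le_max_right _ _)
            omega
          obtain ⟨i, hi⟩ := hex
          obtain ⟨j, hj⟩ := hey
          have hdN : N ≤ d := by
            have : N - 1 ≤ D := by
              rw [hD]
              calc N - 1 = 1 * (N - 1) := (one_mul _).symm
                _ ≤ max m n * (N - 1) := Nat.mul_le_mul_right _ (le_trans hm (le_max_left _ _))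
            omega
          set τ : Fin m ⊕ Fin n →₀ ℕ :=
            Finsupp.single (Sum.inl i) N + Finsupp.single (Sum.inr j) N with hτ
          have hτμ : τ ≤ μ := by
            rw [Finsupp.le_iff]
            intro s _
            rcases s with i' | j'
            · by_cases h : i' = i
              · subst h; simpa [hτ, Finsupp.single_apply] using hi
              · simp [hτ, Finsupp.single_apply, Ne.symm h]
            · by_cases h : j' = j
              · subst h; simpa [hτ, Finsupp.single_apply] using hj
              · simp [hτ, Finsupp.single_apply, Ne.symm h]
          have hτw : Finsupp.weight (w m n) τ = (N, N) := by
            rw [weight_eq]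
            have h1 : (∑ i', τ (Sum.inl i')) = N := by
              rw [hτ]
              simp [Finsupp.single_apply, Finset.sum_add_distrib, Finset.sum_ite_eq']
            have h2 : (∑ j', τ (Sum.inr j')) = N := by
              rw [hτ]
              simp [Finsupp.single_apply, Finset.sum_add_distrib, Finset.sum_ite_eq']
            rw [h1, h2]
          have hμτw : Finsupp.weight (w m n) (μ - τ) = (d - N, d - N) := by
            have hadd : (μ - τ) + τ = μ := tsub_add_cancel_of_le hτμ
            have := congrArg (Finsupp.weight (w m n)) hadd
            rw [map_add, hτw, hwμ] at this
            have h1 := congrArg Prod.fst this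
            have h2 := congrArg Prod.snd this
            simp only [Prod.fst_add, Prod.snd_add] at h1 h2
            ext <;> simp <;> omega
          have hsplit : (monomial μ 1 : MvPolynomial (Fin m ⊕ Fin n) k)
              = monomial (μ - τ) 1 * (X (Sum.inl i) * X (Sum.inr j)) ^ N := by
            have hXX : ((X (Sum.inl i) * X (Sum.inr j) : MvPolynomial (Fin m ⊕ Fin n) k)) ^ N
                = monomial τ 1 := by
              rw [hτ]
              rw [X, X, monomial_mul, monomial_pow]
              congr 1
              · rw [smul_add]
                simp [Finsupp.smul_single]
              · simp
            rw [hXX, monomial_mul, mul_one, tsub_add_cancel_of_le hτμ]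
          rw [hsplit, ← hGf i j, Finset.mul_sum]
          refine Submodule.sum_mem _ fun t _ => ?_
          have hGhom : (G (i, j) t).IsWeightedHomogeneous (w m n) (N - 1, N - 1) :=
            weightedHomogeneousComponent_isWeightedHomogeneous (N - 1, N - 1) (g (i, j) t)
          have hprodhom : ((monomial (μ - τ) 1 : MvPolynomial (Fin m ⊕ Fin n) k)
              * G (i, j) t).IsWeightedHomogeneous (w m n) (d - 1, d - 1) := by
            have hmonh : (monomial (μ - τ) 1 : MvPolynomial (Fin m ⊕ Fin n) k
                ).IsWeightedHomogeneous (w m n) (d - N, d - N) :=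
              isWeightedHomogeneous_monomial _ _ _ hμτw
            have := hmonh.mul hGhom
            have heq : ((d - N, d - N) : ℕ × ℕ) + (N - 1, N - 1) = (d - 1, d - 1) := by
              ext <;> simp <;> omega
            rwa [heq] at this
          have hmem : (monomial (μ - τ) 1 : MvPolynomial (Fin m ⊕ Fin n) k)
              * G (i, j) t ∈ V (d - 1) := ih (d - 1) (by omega) _ hprodhom
          have := mulV (d - 1) t _ hmem
          rw [show d - 1 + 1 = d by omega] at this
          have hre : (monomial (μ - τ) 1 : MvPolynomial (Fin m ⊕ Fin n) k) * (G (i, j) t * f t)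
              = f t * (monomial (μ - τ) 1 * G (i, j) t) := by ring
          rw [hre]
          exact this
      have : (monomial μ (coeff μ φ) : MvPolynomial (Fin m ⊕ Fin n) k)
          = coeff μ φ • monomial μ 1 := by
        rw [MvPolynomial.smul_monomial, smul_eq_mul, mul_one]
      rw [this]
      exact Submodule.smul_mem _ _ hmono
  -- Step E/F : counting
  obtain ⟨r', rfl⟩ : ∃ r'', r = r'' + 1 := ⟨r - 1, by omega⟩
  obtain ⟨m', rfl⟩ : ∃ m'', m = m'' + 1 := ⟨m - 1, by omega⟩
  obtain ⟨n', rfl⟩ : ∃ n'', n = n'' + 1 := ⟨n - 1, by omega⟩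
  have stepEF : ∀ s : ℕ,
      (s + 1) ^ (m' + n') ≤
        ((m' + 1 + (n' + 1)) * s + 1) ^ r' * (D + 1) ^ (m' + 1 + (n' + 1)) := by
    intro s
    set d : ℕ := (m' + 1 + (n' + 1)) * s with hd
    set Φ : (Fin r' → Fin (d + 1)) × ((Fin (m' + 1) ⊕ Fin (n' + 1)) → Fin (D + 1)) →
        MvPolynomial (Fin (m' + 1) ⊕ Fin (n' + 1)) k := fun gv =>
      ((∏ t : Fin r', f (Fin.castSucc t) ^ (gv.1 t : ℕ)) *
        f (Fin.last r') ^ (d - (∑ i, (gv.2 (Sum.inl i) : ℕ)) - (∑ t : Fin r', (gv.1 t : ℕ)))) *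
        monomial (Finsupp.equivFunOnFinite.symm fun s' => ((gv.2 s' : ℕ))) 1 with hΦ
    have hVd : V d ≤ Submodule.span k (Set.range Φ) := by
      rw [hV]
      apply Submodule.span_le.mpr
      rintro q ⟨γ, ν, e, he, hw, hsum, rfl⟩
      have hγle : ∀ t, γ t ≤ d := fun t => by
        have := Finset.single_le_sum (f := γ) (fun _ _ => Nat.zero_le _) (Finset.mem_univ t)
        omega
      have h1 : (∑ i, ν (Sum.inl i)) = e := by
        have h := hw; rw [weight_eq] at h; exact congrArg Prod.fst h
      have h2 : (∑ j, ν (Sum.inr j)) = e := by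
        have h := hw; rw [weight_eq] at h; exact congrArg Prod.snd h
      have hνle : ∀ s', ν s' ≤ D := by
        rintro (i | j)
        · calc ν (Sum.inl i) ≤ ∑ i, ν (Sum.inl i) :=
                Finset.single_le_sum (f := fun i => ν (Sum.inl i))
                  (fun _ _ => Nat.zero_le _) (Finset.mem_univ i)
            _ = e := h1
            _ ≤ D := he
        · calc ν (Sum.inr j) ≤ ∑ j, ν (Sum.inr j) :=
                Finset.single_le_sum (f := fun j => ν (Sum.inr j))
                  (fun _ _ => Nat.zero_le _) (Finset.mem_univ j)
            _ = e := h2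
            _ ≤ D := he
      refine Submodule.subset_span
        ⟨(fun t => ⟨γ (Fin.castSucc t), by have := hγle (Fin.castSucc t); omega⟩,
          fun s' => ⟨ν s', by have := hνle s'; omega⟩), ?_⟩
      rw [hΦ]
      simp only
      have hcoe : (Finsupp.equivFunOnFinite.symm fun s' => ν s') = ν := by
        exact Finsupp.equivFunOnFinite_symm_coe ν
      rw [hcoe]
      have hsplitsum : (∑ t : Fin (r' + 1), γ t)
          = (∑ t : Fin r', γ (Fin.castSucc t)) + γ (Fin.last r') :=
        Fin.sum_univ_castSucc γ
      have hlast : d - (∑ i, ν (Sum.inl i)) - (∑ t : Fin r', γ (Fin.castSucc t))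
          = γ (Fin.last r') := by omega
      rw [hlast, Fin.prod_univ_castSucc (fun t : Fin (r' + 1) => f t ^ γ t)]
    -- the independent family
    have hfam : ∀ (a : Fin m' → Fin (s + 1)) (b : Fin n' → Fin (s + 1)), True := fun _ _ => trivial
    set α : (Fin m' → Fin (s + 1)) → (Fin (m' + 1) → ℕ) :=
      fun a => Fin.cons (d - ∑ t, (a t : ℕ)) (fun t => (a t : ℕ)) with hα
    set β : (Fin n' → Fin (s + 1)) → (Fin (n' + 1) → ℕ) :=
      fun b => Fin.cons (d - ∑ t, (b t : ℕ)) (fun t => (b t : ℕ)) with hβ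
    have hαsum : ∀ a, (∑ i, α a i) = d := by
      intro a
      rw [hα]
      simp only [Fin.sum_cons]
      have hle : (∑ t, (a t : ℕ)) ≤ m' * s := by
        calc (∑ t, (a t : ℕ)) ≤ ∑ _t : Fin m', s :=
              Finset.sum_le_sum fun t _ => Fin.is_le _
          _ = m' * s := by simp [Finset.sum_const, mul_comm]
      have : m' * s ≤ d := by rw [hd]; nlinarith
      omega
    have hβsum : ∀ b, (∑ j, β b j) = d := by
      intro b
      rw [hβ]
      simp only [Fin.sum_cons]
      have hle : (∑ t, (b t : ℕ)) ≤ n' * s := by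
        calc (∑ t, (b t : ℕ)) ≤ ∑ _t : Fin n', s :=
              Finset.sum_le_sum fun t _ => Fin.is_le _
          _ = n' * s := by simp [Finset.sum_const, mul_comm]
      have : n' * s ≤ d := by rw [hd]; nlinarith
      omega
    set μf : ((Fin m' → Fin (s + 1)) × (Fin n' → Fin (s + 1))) →
        (Fin (m' + 1) ⊕ Fin (n' + 1) →₀ ℕ) :=
      fun ab => Finsupp.equivFunOnFinite.symm (Sum.elim (α ab.1) (β ab.2)) with hμf
    have hμapp : ∀ ab s', μf ab s' = Sum.elim (α ab.1) (β ab.2) s' := by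
      intro ab s'
      rw [hμf]
      rfl
    have hμhom : ∀ ab, Finsupp.weight (w (m' + 1) (n' + 1)) (μf ab) = (d, d) := by
      intro ab
      rw [weight_eq]
      have h1 : (∑ i, μf ab (Sum.inl i)) = d := by
        rw [Finset.sum_congr rfl fun i _ => hμapp ab (Sum.inl i)]
        exact hαsum ab.1
      have h2 : (∑ j, μf ab (Sum.inr j)) = d := by
        rw [Finset.sum_congr rfl fun j _ => hμapp ab (Sum.inr j)]
        exact hβsum ab.2
      rw [h1, h2]
    have hμinj : Function.Injective μf := by
      intro ab ab' hab
      have happ : ∀ s', Sum.elim (α ab.1) (β ab.2) s' = Sum.elim (α ab'.1) (β ab'.2) s' := by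
        intro s'
        rw [← hμapp, ← hμapp, hab]
      have ha : ab.1 = ab'.1 := by
        funext t
        have := happ (Sum.inl t.succ)
        simp only [Sum.elim_inl, hα, Fin.cons_succ] at this
        exact Fin.val_injective this
      have hb : ab.2 = ab'.2 := by
        funext t
        have := happ (Sum.inr t.succ)
        simp only [Sum.elim_inr, hβ, Fin.cons_succ] at this
        exact Fin.val_injective this
      exact Prod.ext ha hb
    -- linear independence
    have hLI : LinearIndependent k (fun ab : (Fin m' → Fin (s + 1)) × (Fin n' → Fin (s + 1)) =>
        (monomial (μf ab) 1 : MvPolynomial (Fin (m' + 1) ⊕ Fin (n' + 1)) k)) := by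
      have h := (MvPolynomial.basisMonomials (Fin (m' + 1) ⊕ Fin (n' + 1)) k
        ).linearIndependent.comp μf hμinj
      have heq : (fun ab : (Fin m' → Fin (s + 1)) × (Fin n' → Fin (s + 1)) =>
          (monomial (μf ab) 1 : MvPolynomial (Fin (m' + 1) ⊕ Fin (n' + 1)) k))
          = (MvPolynomial.basisMonomials (Fin (m' + 1) ⊕ Fin (n' + 1)) k) ∘ μf := by
        funext ab
        simp [Function.comp, MvPolynomial.coe_basisMonomials]
      rw [heq]
      exact h
    have hmemb : ∀ ab, (monomial (μf ab) 1 : MvPolynomial (Fin (m' + 1) ⊕ Fin (n' + 1)) k)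
        ∈ Submodule.span k (Set.range Φ) := by
      intro ab
      refine hVd (key d _ ?_)
      exact isWeightedHomogeneous_monomial _ _ _ (hμhom ab)
    haveI : Module.Finite k (Submodule.span k (Set.range Φ)) :=
      FiniteDimensional.span_of_finite k (Set.finite_range Φ)
    have hLI' : LinearIndependent k
        (fun ab : (Fin m' → Fin (s + 1)) × (Fin n' → Fin (s + 1)) =>
          (⟨monomial (μf ab) 1, hmemb ab⟩ : Submodule.span k (Set.range Φ))) := by
      apply LinearIndependent.of_comp (Submodule.span k (Set.range Φ)).subtype
      exact hLI
    have hcard1 : Fintype.card ((Fin m' → Fin (s + 1)) × (Fin n' → Fin (s + 1)))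
        ≤ Module.finrank k (Submodule.span k (Set.range Φ)) :=
      hLI'.fintype_card_le_finrank
    have hcard2 : Module.finrank k (Submodule.span k (Set.range Φ))
        ≤ Fintype.card ((Fin r' → Fin (d + 1)) × ((Fin (m' + 1) ⊕ Fin (n' + 1)) → Fin (D + 1))) := by
      have hrange : Set.range Φ = ↑(Finset.univ.image Φ) := by
        rw [Finset.coe_image, Finset.coe_univ, Set.image_univ]
      rw [hrange]
      refine le_trans (finrank_span_finset_le_card _) ?_
      exact le_trans (Finset.card_image_le) (by simp)
    have hfinal := le_trans hcard1 hcard2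
    rw [Fintype.card_prod, Fintype.card_prod, Fintype.card_fun, Fintype.card_fun,
      Fintype.card_fun, Fintype.card_fin, Fintype.card_fin, Fintype.card_fin,
      Fintype.card_fin, Fintype.card_fin] at hfinal
    calc (s + 1) ^ (m' + n') = (s + 1) ^ m' * (s + 1) ^ n' := pow_add _ _ _
      _ ≤ (d + 1) ^ r' * (D + 1) ^ Fintype.card (Fin (m' + 1) ⊕ Fin (n' + 1)) := by
          simpa using hfinal
      _ = ((m' + 1 + (n' + 1)) * s + 1) ^ r' * (D + 1) ^ (m' + 1 + (n' + 1)) := by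
          rw [hd]
          congr 1
          simp [Fintype.card_sum]
  -- Step G : numeric contradiction
  have hM : 3 ≤ m' + 1 + (n' + 1) := by omega
  set Mtot : ℕ := m' + 1 + (n' + 1) with hMtot
  set Cbound : ℕ := Mtot ^ r' * (D + 1) ^ Mtot with hCbound
  have hGs : ∀ s : ℕ, s + 1 ≤ Cbound := by
    intro s
    have h0 := stepEF s
    have h1 : (Mtot * s + 1) ^ r' ≤ (Mtot * (s + 1)) ^ r' := by
      apply Nat.pow_le_pow_left
      rw [Nat.mul_succ]
      omega
    have h2 : (s + 1) ^ (m' + n') ≤ Mtot ^ r' * (s + 1) ^ r' * (D + 1) ^ Mtot := by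
      calc (s + 1) ^ (m' + n') ≤ (Mtot * s + 1) ^ r' * (D + 1) ^ Mtot := h0
        _ ≤ (Mtot * (s + 1)) ^ r' * (D + 1) ^ Mtot := Nat.mul_le_mul_right _ h1
        _ = Mtot ^ r' * (s + 1) ^ r' * (D + 1) ^ Mtot := by rw [mul_pow]
    have h3 : (s + 1) ^ (r' + 1) ≤ (s + 1) ^ (m' + n') :=
      Nat.pow_le_pow_right (by omega) (by omega)
    have h4 : (s + 1) ^ r' * (s + 1) ≤ (s + 1) ^ r' * Cbound := by
      calc (s + 1) ^ r' * (s + 1) = (s + 1) ^ (r' + 1) := by rw [pow_succ]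
        _ ≤ Mtot ^ r' * (s + 1) ^ r' * (D + 1) ^ Mtot := le_trans h3 h2
        _ = (s + 1) ^ r' * Cbound := by rw [hCbound]; ring
    exact Nat.le_of_mul_le_mul_left (by
      have hpos : 0 < (s + 1) ^ r' := Nat.pow_pos (by omega)
      calc (s + 1) ^ r' * (s + 1) ≤ (s + 1) ^ r' * Cbound := h4
      ) (Nat.pow_pos (by omega))
  have := hGs Cbound
  omega




end BilinHelp

open BilinHelp

/-- **Hartshorne's bilinear map lemma.** If `k` is algebraically closed, `U, V, W` are
finite-dimensional `k`-vector spaces with `U ≠ 0` and `V ≠ 0`, and `φ : U × V → W` is a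
bilinear map with `φ(u, v) ≠ 0` whenever `u ≠ 0` and `v ≠ 0`, then
`dim W ≥ dim U + dim V - 1`. -/
theorem bilinear_map_lemma {k U V W : Type*} [Field k] [IsAlgClosed k]
    [AddCommGroup U] [Module k U] [FiniteDimensional k U]
    [AddCommGroup V] [Module k V] [FiniteDimensional k V]
    [AddCommGroup W] [Module k W] [FiniteDimensional k W]
    [Nontrivial U] [Nontrivial V]
    (φ : U →ₗ[k] V →ₗ[k] W)
    (hφ : ∀ u : U, u ≠ 0 → ∀ v : V, v ≠ 0 → φ u v ≠ 0) :
    Module.finrank k U + Module.finrank k V ≤ Module.finrank k W + 1 := by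
  classical
  have hm : 1 ≤ Module.finrank k U := Module.finrank_pos
  have hn : 1 ≤ Module.finrank k V := Module.finrank_pos
  by_cases hr0 : Module.finrank k W = 0
  · exfalso
    have hsub : Subsingleton W := (Module.finrank_zero_iff (R := k)).mp hr0
    obtain ⟨u, hu⟩ := exists_ne (0 : U)
    obtain ⟨v, hv⟩ := exists_ne (0 : V)
    exact hφ u hu v hv (Subsingleton.elim _ _)
  have hr : 1 ≤ Module.finrank k W := by omega
  set m := Module.finrank k U with hmdef
  set n := Module.finrank k V with hndef
  set r := Module.finrank k W with hrdef
  set bU := Module.finBasis k U with hbU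
  set bV := Module.finBasis k V with hbV
  set bW := Module.finBasis k W with hbW
  set f : Fin r → MvPolynomial (Fin m ⊕ Fin n) k := fun t =>
    ∑ i, ∑ j, MvPolynomial.C (bW.repr (φ (bU i) (bV j)) t)
      * X (Sum.inl i) * X (Sum.inr j) with hfdef
  have hf : ∀ t, (f t).IsWeightedHomogeneous (w m n) (1, 1) := by
    intro t
    apply IsWeightedHomogeneous.sum
    intro i _
    apply IsWeightedHomogeneous.sum
    intro j _
    have h := ((isWeightedHomogeneous_C (w m n)
        (bW.repr (φ (bU i) (bV j)) t)).mul
      (isWeightedHomogeneous_X k (w m n) (Sum.inl i))).mul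
      (isWeightedHomogeneous_X k (w m n) (Sum.inr j))
    simpa [w, Prod.ext_iff] using h
  have heval : ∀ (p : Fin m ⊕ Fin n → k) (t : Fin r),
      eval p (f t)
        = bW.repr (φ (∑ i, p (Sum.inl i) • bU i) (∑ j, p (Sum.inr j) • bV j)) t := by
    intro p t
    have hexp : φ (∑ i, p (Sum.inl i) • bU i) (∑ j, p (Sum.inr j) • bV j)
        = ∑ i, ∑ j, (p (Sum.inl i) * p (Sum.inr j)) • φ (bU i) (bV j) := by
      have h1 : φ (∑ i, p (Sum.inl i) • bU i) = ∑ i, p (Sum.inl i) • φ (bU i) := by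
        rw [map_sum]
        exact Finset.sum_congr rfl fun i _ => map_smul φ _ _
      rw [h1, LinearMap.sum_apply]
      refine Finset.sum_congr rfl fun i _ => ?_
      rw [LinearMap.smul_apply, map_sum, Finset.smul_sum]
      refine Finset.sum_congr rfl fun j _ => ?_
      rw [map_smul, smul_smul]
    rw [hexp, hfdef]
    simp only [map_sum, eval_mul, eval_C, eval_X, map_smul, Finsupp.coe_finset_sum,
      Finset.sum_apply, Finsupp.smul_apply, smul_eq_mul]
    refine Finset.sum_congr rfl fun i _ => Finset.sum_congr rfl fun j _ => by ring
  have hz : ∀ p : Fin m ⊕ Fin n → k, (∀ t, eval p (f t) = 0) →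
      (∀ i, p (Sum.inl i) = 0) ∨ (∀ j, p (Sum.inr j) = 0) := by
    intro p hp
    set u := ∑ i, p (Sum.inl i) • bU i with hu
    set v := ∑ j, p (Sum.inr j) • bV j with hv
    have hφuv : φ u v = 0 := by
      apply bW.repr.injective
      rw [map_zero]
      ext t
      rw [← heval p t]
      simpa using hp t
    have hrepU := bU.repr_sum_self (fun i => p (Sum.inl i))
    have hrepV := bV.repr_sum_self (fun j => p (Sum.inr j))
    by_cases hu0 : u = 0
    · left
      intro i
      have : (bU.repr u : Fin m → k) i = p (Sum.inl i) := by
        rw [hu]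
        rw [hrepU]
      rw [← this, hu0, map_zero]
      simp
    · by_cases hv0 : v = 0
      · right
        intro j
        have : (bV.repr v : Fin n → k) j = p (Sum.inr j) := by
          rw [hv]
          rw [hrepV]
        rw [← this, hv0, map_zero]
        simp
      · exact absurd hφuv (hφ u hu0 v hv0)
  exact core m n r hm hn hr f hf hz
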